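/- Let E be a set and P a vector space with a family (▷ᵃ)_{a∈E} of bilinear products. Then (P, (▷ᵃ)) is an E-multi-pre-Lie algebra (i.e., x ▷ᵃ (y ▷ᵇ z) − (x ▷ᵃ y) ▷ᵇ z = y ▷ᵇ (x ▷ᵃ z) − (y ▷ᵇ x) ▷ᵃ z for all a,b ∈ E) if and only if the bilinear product on P ⊗ kE defined by (σ ⊗ a) ▷ (τ ⊗ b) := (σ ▷ᵃ τ) ⊗ b is a pre-Lie product. -/

import Mathlib

open TensorProduct


private lemma aux_add {M : Type*} [AddCommGroup M] {a b c d a' b' c' d' : M}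
    (h1 : a - b = c - d) (h2 : a' - b' = c' - d') :
    (a + a') - (b + b') = (c + c') - (d + d') := by
  rw [add_sub_add_comm, add_sub_add_comm, h1, h2]

private lemma aux_smul {M : Type*} [AddCommGroup M] {K : Type*} [Field K] [Module K M]
    {a b c d : M} (r : K) (h1 : a - b = c - d) :
    (r • a) - (r • b) = (r • c) - (r • d) := by
  rw [← smul_sub, ← smul_sub, h1]

/-- **Multi-pre-Lie ⇔ pre-Lie on `P ⊗ kE`.**  Let `P` be a vector space over a field `K`
of characteristic zero, `E` a set, and `(▷ᵃ)_{a∈E}` a family of bilinear products on `P`.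
Let `q` be the bilinear product on `P ⊗ kE` (with `kE` the free vector space `E →₀ K`)
determined by `(σ ⊗ a) ▷ (τ ⊗ b) = (σ ▷ᵃ τ) ⊗ b`.  Then `(P, (▷ᵃ))` is an
`E`-multi-pre-Lie algebra if and only if `q` is a pre-Lie product. -/
theorem multiPreLie_iff_tensor_preLie {K P E : Type} [Field K] [CharZero K]
    [AddCommGroup P] [Module K P]
    (prod : E → P →ₗ[K] P →ₗ[K] P)
    (q : (P ⊗[K] (E →₀ K)) →ₗ[K] (P ⊗[K] (E →₀ K)) →ₗ[K] (P ⊗[K] (E →₀ K)))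
    (hq : ∀ (a b : E) (σ τ : P),
      q (σ ⊗ₜ[K] Finsupp.single a 1) (τ ⊗ₜ[K] Finsupp.single b 1)
        = (prod a σ τ) ⊗ₜ[K] Finsupp.single b 1) :
    (∀ (a b : E) (x y z : P),
        prod a x (prod b y z) - prod b (prod a x y) z
          = prod b y (prod a x z) - prod a (prod b y x) z)
      ↔ (∀ u v w : P ⊗[K] (E →₀ K),
          q u (q v w) - q (q u v) w = q v (q u w) - q (q v u) w) := by
  constructor
  · intro h
    -- the generating set
    set S : Set (P ⊗[K] (E →₀ K)) :=
      {x | ∃ σ a, x = σ ⊗ₜ[K] Finsupp.single a 1} with hS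
    have hspan : ∀ x : P ⊗[K] (E →₀ K), x ∈ Submodule.span K S := by
      intro x
      induction x using TensorProduct.induction_on with
      | zero => exact Submodule.zero_mem _
      | add x y hx hy => exact Submodule.add_mem _ hx hy
      | tmul σ f =>
        induction f using Finsupp.induction with
        | zero => simp
        | single_add a c f _ _ ih =>
          rw [TensorProduct.tmul_add]
          refine Submodule.add_mem _ ?_ ih
          have : σ ⊗ₜ[K] Finsupp.single a c = c • (σ ⊗ₜ[K] Finsupp.single a 1) := by
            rw [TensorProduct.smul_tmul', TensorProduct.smul_tmul]
            simp [Finsupp.smul_single]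
          rw [this]
          exact Submodule.smul_mem _ _ (Submodule.subset_span ⟨σ, a, rfl⟩)
    intro u v w
    induction hspan w using Submodule.span_induction with
    | mem w hw =>
      induction hspan v using Submodule.span_induction with
      | mem v hv =>
        induction hspan u using Submodule.span_induction with
        | mem u hu =>
          obtain ⟨x, a, rfl⟩ := hu
          obtain ⟨y, b, rfl⟩ := hv
          obtain ⟨z, c, rfl⟩ := hw
          simp only [hq]
          rw [← TensorProduct.sub_tmul, ← TensorProduct.sub_tmul, h a b x y z]
        | zero => simp
        | add u₁ u₂ _ _ h1 h2 =>
          simp only [map_add, LinearMap.add_apply] at h1 h2 ⊢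
          exact aux_add h1 h2
        | smul c u _ h1 =>
          simp only [map_smul, LinearMap.smul_apply] at h1 ⊢
          exact aux_smul c h1
      | zero => simp
      | add v₁ v₂ _ _ h1 h2 =>
        simp only [map_add, LinearMap.add_apply] at h1 h2 ⊢
        exact aux_add h1 h2
      | smul c v _ h1 =>
        simp only [map_smul, LinearMap.smul_apply] at h1 ⊢
        exact aux_smul c h1
    | zero => simp
    | add w₁ w₂ _ _ h1 h2 =>
      simp only [map_add, LinearMap.add_apply] at h1 h2 ⊢
      exact aux_add h1 h2
    | smul c w _ h1 =>
      simp only [map_smul, LinearMap.smul_apply] at h1 ⊢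
      exact aux_smul c h1
  · intro h a b x y z
    have := h (x ⊗ₜ[K] Finsupp.single a 1) (y ⊗ₜ[K] Finsupp.single b 1)
      (z ⊗ₜ[K] Finsupp.single b 1)
    simp only [hq] at this
    have hφ : ∀ p : P, ((TensorProduct.rid K P).toLinearMap.comp
        (LinearMap.lTensor P (Finsupp.lapply b))) (p ⊗ₜ[K] Finsupp.single b 1) = p := by
      intro p; simp [LinearMap.lTensor_tmul]
    have := congrArg ((TensorProduct.rid K P).toLinearMap.comp
        (LinearMap.lTensor P (Finsupp.lapply b))) this
    simpa only [map_sub, hφ] using this
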